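/- Let $n \ge 2$, $d \ge 2$, $i \ge 1$ be integers with $m = \lfloor n/2 \rfloor$ and $m + i \le n$. Suppose for each $l = 1, \dots, i$ the value $x_l$ satisfies the triangular system $\sum_{j=1}^{l} d^{-2m-l-j}\binom{m+l}{m+j} x_j = d^{-(n-m-l)} - d^{-(m+l)}$. Then $x_i = \sum_{j=1}^{i} (-1)^{i+j} d^{2m+i+j} \binom{m+i}{m+j} \left( d^{-(n-m-j)} - d^{-(m+j)} \right)$. -/

import Mathlib

open Finset

private lemma comb_aux (m k l : ℕ) (hk : k ≤ l) :
    ∑ j ∈ Finset.Icc k l, (-1:ℝ)^(j+k) * (((m+l).choose (m+j) : ℝ) * ((m+j).choose (m+k)))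
      = if l = k then 1 else 0 := by
  rw [← Finset.Ico_add_one_right_eq_Icc, Finset.sum_Ico_eq_sum_range]
  rw [show l + 1 - k = (l - k) + 1 by omega]
  have key : ∀ t ∈ Finset.range (l - k + 1),
      (-1:ℝ)^((k+t)+k) * (((m+l).choose (m+(k+t)) : ℝ) * ((m+(k+t)).choose (m+k)))
      = ((m+l).choose (m+k) : ℝ) * ((-1:ℝ)^t * ((l-k).choose t)) := by
    intro t ht
    have htl : t ≤ l - k := by
      have := Finset.mem_range.mp ht; omega
    have hch : (m+l).choose (m+(k+t)) * (m+(k+t)).choose (m+k)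
        = (m+l).choose (m+k) * ((l - k).choose t) := by
      have h := Nat.choose_mul (n := m+l) (k := m+(k+t)) (s := m+k) (by omega)
      rw [h]
      congr 2 <;> omega
    have hsgn : (-1:ℝ)^((k+t)+k) = (-1:ℝ)^t := by
      rw [show (k+t)+k = t + 2*k by omega, pow_add, pow_mul]
      simp
    calc (-1:ℝ)^((k+t)+k) * (((m+l).choose (m+(k+t)) : ℝ) * ((m+(k+t)).choose (m+k)))
        = (-1:ℝ)^t * (((m+l).choose (m+(k+t)) * (m+(k+t)).choose (m+k) : ℕ) : ℝ) := by
          rw [hsgn]; push_cast; ring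
      _ = ((m+l).choose (m+k) : ℝ) * ((-1:ℝ)^t * ((l-k).choose t)) := by
          rw [hch]; push_cast; ring
  rw [Finset.sum_congr rfl key, ← Finset.mul_sum]
  have halt : ∑ t ∈ Finset.range (l-k+1), (-1:ℝ)^t * ((l-k).choose t)
      = if l - k = 0 then 1 else 0 := by
    have h := Int.alternating_sum_range_choose (n := l - k)
    have h2 := congrArg (Int.cast : ℤ → ℝ) h
    simpa using h2
  rw [halt]
  rcases eq_or_ne l k with rfl|h
  · simp
  · have : l - k ≠ 0 := by omega
    simp [h, this]

private lemma ysys (d : ℝ) (hd : d ≠ 0) (m : ℕ) (b : ℕ → ℝ) (l : ℕ) (hl : 1 ≤ l) :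
    ∑ j ∈ Finset.Icc 1 l, d ^ (-(2*(m:ℤ)+l+j)) * (((m+l).choose (m+j) : ℕ) : ℝ) *
      (∑ k ∈ Finset.Icc 1 j, (-1:ℝ)^(j+k) * d^((2*(m:ℤ)+j+k)) * (((m+j).choose (m+k) : ℕ) : ℝ) * b k)
    = b l := by
  simp only [Finset.mul_sum]
  rw [Finset.sum_comm' (s' := fun k => Finset.Icc k l) (t' := Finset.Icc 1 l)
    (by intro j k; simp only [Finset.mem_Icc]; omega)]
  have inner : ∀ k ∈ Finset.Icc 1 l,
      ∑ j ∈ Finset.Icc k l, d ^ (-(2*(m:ℤ)+l+j)) * (((m+l).choose (m+j) : ℕ) : ℝ) *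
        ((-1:ℝ)^(j+k) * d^((2*(m:ℤ)+j+k)) * (((m+j).choose (m+k) : ℕ) : ℝ) * b k)
      = (if l = k then 1 else 0) * (d ^ ((k:ℤ)-l) * b k) := by
    intro k hk
    rw [Finset.mem_Icc] at hk
    have step : ∀ j ∈ Finset.Icc k l,
        d ^ (-(2*(m:ℤ)+l+j)) * (((m+l).choose (m+j) : ℕ) : ℝ) *
          ((-1:ℝ)^(j+k) * d^((2*(m:ℤ)+j+k)) * (((m+j).choose (m+k) : ℕ) : ℝ) * b k)
        = ((-1:ℝ)^(j+k) * (((m+l).choose (m+j) : ℝ) * ((m+j).choose (m+k)))) *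
            (d ^ ((k:ℤ)-l) * b k) := by
      intro j hj
      have hpow : d ^ (-(2*(m:ℤ)+l+j)) * d^((2*(m:ℤ)+j+k)) = d ^ ((k:ℤ)-l) := by
        rw [← zpow_add₀ hd]
        congr 1
        ring
      calc d ^ (-(2*(m:ℤ)+l+j)) * (((m+l).choose (m+j) : ℕ) : ℝ) *
          ((-1:ℝ)^(j+k) * d^((2*(m:ℤ)+j+k)) * (((m+j).choose (m+k) : ℕ) : ℝ) * b k)
          = (d ^ (-(2*(m:ℤ)+l+j)) * d^((2*(m:ℤ)+j+k))) *
            ((-1:ℝ)^(j+k) * (((m+l).choose (m+j) : ℝ) * ((m+j).choose (m+k)))) * b k := by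
            ring
        _ = _ := by rw [hpow]; ring
    rw [Finset.sum_congr rfl step, ← Finset.sum_mul, comb_aux m k l hk.2]
  rw [Finset.sum_congr rfl inner]
  rw [Finset.sum_eq_single_of_mem l (Finset.mem_Icc.mpr ⟨hl, le_rfl⟩)]
  · simp
  · intro k hk hkl
    simp [Ne.symm hkl]

theorem trace_closed_form (n d i : ℕ) (hn : 2 ≤ n) (hd : 2 ≤ d) (hi : 1 ≤ i)
    (m : ℕ) (hm : m = n / 2) (hmi : m + i ≤ n) (x : ℕ → ℝ)
    (hsys : ∀ l, 1 ≤ l → l ≤ i →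
      ∑ j ∈ Finset.Icc 1 l,
        (d : ℝ) ^ (-(2 * (m : ℤ) + l + j)) * ((m + l).choose (m + j)) * x j
      = (d : ℝ) ^ (-((n : ℤ) - m - l)) - (d : ℝ) ^ (-((m : ℤ) + l))) :
    x i = ∑ j ∈ Finset.Icc 1 i,
      (-1 : ℝ) ^ (i + j) * (d : ℝ) ^ ((2 * (m : ℤ) + i + j)) * ((m + i).choose (m + j))
        * ((d : ℝ) ^ (-((n : ℤ) - m - j)) - (d : ℝ) ^ (-((m : ℤ) + j))) := by
  have hd0 : (d : ℝ) ≠ 0 := by positivity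
  set b : ℕ → ℝ := fun k => (d : ℝ) ^ (-((n : ℤ) - m - k)) - (d : ℝ) ^ (-((m : ℤ) + k)) with hb
  set y : ℕ → ℝ := fun l => ∑ k ∈ Finset.Icc 1 l,
    (-1 : ℝ) ^ (l + k) * (d : ℝ) ^ ((2 * (m : ℤ) + l + k)) * (((m + l).choose (m + k) : ℕ) : ℝ)
      * b k with hy
  have key : ∀ l, 1 ≤ l → l ≤ i → x l = y l := by
    intro l
    induction l using Nat.strong_induction_on with
    | _ l ih =>
      intro hl1 hl2
      have h1 := hsys l hl1 hl2
      have h2 := ysys (d : ℝ) hd0 m b l hl1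
      rw [← Finset.Ico_add_one_right_eq_Icc, Finset.sum_Ico_succ_top hl1] at h1 h2
      have hcongr : ∑ j ∈ Finset.Ico 1 l,
          (d : ℝ) ^ (-(2 * (m : ℤ) + l + j)) * ((m + l).choose (m + j)) * x j
          = ∑ j ∈ Finset.Ico 1 l,
            (d : ℝ) ^ (-(2 * (m : ℤ) + l + j)) * ((m + l).choose (m + j)) *
              (∑ k ∈ Finset.Icc 1 j, (-1:ℝ)^(j+k) * (d:ℝ)^((2*(m:ℤ)+j+k)) *
                (((m+j).choose (m+k) : ℕ) : ℝ) * b k) := by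
        apply Finset.sum_congr rfl
        intro j hj
        rw [Finset.mem_Ico] at hj
        rw [ih j hj.2 hj.1 (by omega), hy]
      rw [hcongr] at h1
      have hc : ((d : ℝ) ^ (-(2 * (m : ℤ) + l + l)) * (((m + l).choose (m + l) : ℕ) : ℝ)) ≠ 0 := by
        simp only [Nat.choose_self, Nat.cast_one, mul_one]
        exact zpow_ne_zero _ hd0
      have hgoal : (d : ℝ) ^ (-(2 * (m : ℤ) + l + l)) * (((m + l).choose (m + l) : ℕ) : ℝ) * x l
          = (d : ℝ) ^ (-(2 * (m : ℤ) + l + l)) * (((m + l).choose (m + l) : ℕ) : ℝ) *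
            (∑ k ∈ Finset.Icc 1 l, (-1:ℝ)^(l+k) * (d:ℝ)^((2*(m:ℤ)+l+k)) *
              (((m+l).choose (m+k) : ℕ) : ℝ) * b k) := by
        have hb1 : b l = (d : ℝ) ^ (-((n : ℤ) - m - l)) - (d : ℝ) ^ (-((m : ℤ) + l)) := rfl
        linarith [h1, h2]
      have := mul_left_cancel₀ hc hgoal
      rw [this, hy]
  rw [key i hi le_rfl, hy]
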